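/- The sequence M_n defined by M_n = n! if n is even and M_n = (n-1)! if n is odd satisfies property (⋆) (with some b > 0, M_{n+k} ≥ b^{n+k} M_n M_k for all n, k) and moderate growth (with some B > 0, M_{n+k} ≤ B^{n+k} M_n M_k for all n, k), but is not logarithmically convex. -/

import Mathlib

open Nat

lemma aux_choose_le (m n : ℕ) : m.choose n ≤ 2 ^ m := by
  rcases le_or_gt n m with h | h
  · calc m.choose n ≤ ∑ i ∈ Finset.range (m + 1), m.choose i :=
        Finset.single_le_sum (fun x _ ↦ Nat.zero_le _)
          (Finset.mem_range.mpr (Nat.lt_succ_of_le h))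
    _ = 2 ^ m := Nat.sum_range_choose m
  · rw [Nat.choose_eq_zero_of_lt h]; exact Nat.zero_le _

lemma aux_fac_le (n k : ℕ) : n ! * k ! ≤ (n + k)! := by
  have := Nat.add_choose_mul_factorial_mul_factorial n k
  calc n ! * k ! ≤ (n + k).choose k * n ! * k ! := by
        have h1 : 1 ≤ (n + k).choose k := Nat.choose_pos (Nat.le_add_left k n)
        nlinarith
  _ = (n + k)! := this

lemma aux_fac_ge (n k : ℕ) : (n + k)! ≤ 2 ^ (n + k) * (n ! * k !) := by
  have h := (Nat.add_choose_mul_factorial_mul_factorial n k).symm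
  calc (n + k)! = (n + k).choose k * n ! * k ! := h
  _ ≤ 2 ^ (n + k) * n ! * k ! := by
      have := aux_choose_le (n + k) k
      exact Nat.mul_le_mul_right _ (Nat.mul_le_mul_right _ this)
  _ = 2 ^ (n + k) * (n ! * k !) := by ring

theorem stmt_10 (M : ℕ → ℝ)
    (hM : ∀ n, M n = if Even n then ((Nat.factorial n : ℕ) : ℝ)
                     else ((Nat.factorial (n - 1) : ℕ) : ℝ)) :
    (∃ b > 0, ∀ n k : ℕ, b ^ (n + k) * M n * M k ≤ M (n + k)) ∧
    (∃ B > 0, ∀ n k : ℕ, M (n + k) ≤ B ^ (n + k) * M n * M k) ∧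
    ¬ (∀ n ≥ 1, (M n) ^ 2 ≤ M (n - 1) * M (n + 1)) := by
  -- basic bounds: M m ≤ m! and m! ≤ 2^m * M m, and M m > 0
  have hpos : ∀ m, 0 < M m := by
    intro m; rw [hM m]
    split <;> exact_mod_cast Nat.factorial_pos _
  have hub : ∀ m, M m ≤ (m ! : ℝ) := by
    intro m; rw [hM m]
    split
    · exact le_refl _
    · exact_mod_cast Nat.factorial_le (Nat.sub_le m 1)
  have hlb : ∀ m, (m ! : ℝ) ≤ 2 ^ m * M m := by
    intro m; rw [hM m]
    split
    · have h1 : (1:ℝ) ≤ 2 ^ m := by exact_mod_cast Nat.one_le_two_pow (n := m)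
      nlinarith [(Nat.cast_pos (α := ℝ)).mpr (Nat.factorial_pos m)]
    · rename_i hodd
      have hm : 1 ≤ m := Nat.one_le_iff_ne_zero.mpr (by rintro rfl; exact hodd Even.zero)
      have hfac : m ! = m * (m - 1)! := by
        rcases m with _ | p
        · omega
        · simp [Nat.factorial_succ]
      have hmle : (m : ℝ) ≤ 2 ^ m := by
        exact_mod_cast (Nat.lt_two_pow_self (n := m)).le
      have hf : (0 : ℝ) ≤ ((m - 1)! : ℕ) := Nat.cast_nonneg _
      push_cast [hfac]
      nlinarith
  refine ⟨⟨1/2, by norm_num, fun n k => ?_⟩, ⟨4, by norm_num, fun n k => ?_⟩, ?_⟩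
  · -- (⋆)
    have h1 : M n * M k ≤ ((n + k)! : ℝ) := by
      calc M n * M k ≤ (n ! : ℝ) * (k ! : ℝ) :=
        mul_le_mul (hub n) (hub k) (hpos k).le (Nat.cast_nonneg _)
      _ ≤ ((n + k)! : ℝ) := by exact_mod_cast aux_fac_le n k
      
    have h2 : ((n + k)! : ℝ) ≤ 2 ^ (n + k) * M (n + k) := hlb (n + k)
    have hp : (0 : ℝ) < 2 ^ (n + k) := pow_pos two_pos _
    rw [div_pow, one_pow]
    rw [div_mul_eq_mul_div, div_mul_eq_mul_div, div_le_iff₀ hp]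
    nlinarith
  · -- moderate growth
    have h1 : M (n + k) ≤ (n ! : ℝ) * (k ! : ℝ) * 2 ^ (n + k) := by
      calc M (n + k) ≤ ((n + k)! : ℝ) := hub (n + k)
      _ ≤ 2 ^ (n + k) * ((n ! : ℝ) * (k ! : ℝ)) := by exact_mod_cast aux_fac_ge n k
      _ = (n ! : ℝ) * (k ! : ℝ) * 2 ^ (n + k) := by ring
    have h2 : (n ! : ℝ) ≤ 2 ^ n * M n := hlb n
    have h3 : (k ! : ℝ) ≤ 2 ^ k * M k := hlb k
    have e4 : (4 : ℝ) ^ (n + k) = 2 ^ (n + k) * (2 ^ n * 2 ^ k) := by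
      rw [← pow_add]
      rw [show (4:ℝ) = 2^2 by norm_num, ← pow_mul]
      ring_nf
    rw [e4]
    have hf1 : (0:ℝ) ≤ (n ! : ℝ) := Nat.cast_nonneg _
    have hf2 : (0:ℝ) ≤ (k ! : ℝ) := Nat.cast_nonneg _
    nlinarith [pow_pos (two_pos (α := ℝ)) n, pow_pos (two_pos (α := ℝ)) k,
      pow_pos (two_pos (α := ℝ)) (n + k), hpos n, hpos k,
      mul_le_mul h2 h3 hf2 (mul_pos (pow_pos two_pos n) (hpos n)).le]
  · -- not lc at n = 2
    intro h
    have := h 2 (by norm_num)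
    rw [hM 2, hM 1, hM 3] at this
    norm_num [Nat.factorial, Nat.even_iff] at this
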